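/- arXiv:2009.08816 — 2 statements merged into one kernel-verified Lean document; each statement's English description precedes it below -/
import Mathlib

section
/- For all integers L ≥ 1, M with 1 ≤ M ≤ 2^L, and δ ≥ 1 with M − δ ≥ 0, the inequality log₂ C(2^L, M) − log₂ ( C(2^L, M−δ) / C(M, M−δ) ) ≥ δ·L − δ·(M−1)·log₂(e)/(2^L − M + 1) − log₂(δ!) holds. -/
open Real

/-- Redundancy lower bound computation of Theorem 1:
`log₂ C(2^L, M) − log₂ (C(2^L, M−δ) / C(M, M−δ))
  ≥ δL − δ(M−1)log₂ e /(2^L − M + 1) − log₂(δ!)`. -/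
theorem stmt_2 (L M δ : ℕ) (hL : 1 ≤ L) (hM : 1 ≤ M) (hMle : M ≤ 2 ^ L)
    (hδ : 1 ≤ δ) (hδM : δ ≤ M) :
    Real.logb 2 (Nat.choose (2 ^ L) M) -
      Real.logb 2 ((Nat.choose (2 ^ L) (M - δ) : ℝ) / (Nat.choose M (M - δ) : ℝ)) ≥
    (δ : ℝ) * L - (δ : ℝ) * ((M : ℝ) - 1) * Real.logb 2 (Real.exp 1) /
        ((2 ^ L : ℝ) - (M : ℝ) + 1) - Real.logb 2 (Nat.factorial δ) := by
  set N := 2 ^ L with hNdef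
  have hδM' : M - δ ≤ M := Nat.sub_le _ _
  set K := N - (M - δ) with hKdef
  have hδK : δ ≤ K := by omega
  have hid : N.choose M * M.choose (M - δ) = N.choose (M - δ) * K.choose δ := by
    have := Nat.choose_mul (n := N) hδM'
    rwa [Nat.sub_sub_self hδM] at this
  have h1 : (0:ℝ) < N.choose M := by exact_mod_cast Nat.choose_pos hMle
  have h2 : (0:ℝ) < N.choose (M - δ) := by exact_mod_cast Nat.choose_pos (le_trans hδM' hMle)
  have h3 : (0:ℝ) < M.choose (M - δ) := by exact_mod_cast Nat.choose_pos hδM'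
  have h4 : (0:ℝ) < K.choose δ := by exact_mod_cast Nat.choose_pos hδK
  -- rewrite the LHS as logb 2 (K.choose δ)
  have hLHS : Real.logb 2 (Nat.choose N M) -
      Real.logb 2 ((Nat.choose N (M - δ) : ℝ) / (Nat.choose M (M - δ) : ℝ)) =
      Real.logb 2 (K.choose δ) := by
    rw [Real.logb_div h2.ne' h3.ne']
    have hm : Real.logb 2 (Nat.choose N M) + Real.logb 2 (Nat.choose M (M - δ)) =
        Real.logb 2 (Nat.choose N (M - δ)) + Real.logb 2 (K.choose δ) := by
      rw [← Real.logb_mul h1.ne' h3.ne', ← Real.logb_mul h2.ne' h4.ne']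
      congr 1
      exact_mod_cast hid
    linarith
  rw [hLHS]
  -- lower bound logb 2 (K.choose δ) by δ * logb 2 (N - M + 1) - logb 2 δ!
  have hpow : ((N - M + 1 : ℕ) : ℝ) ^ δ ≤ (Nat.factorial δ : ℝ) * (K.choose δ : ℝ) := by
    have h := Nat.pow_sub_le_descFactorial K δ
    rw [Nat.descFactorial_eq_factorial_mul_choose] at h
    have hKe : K + 1 - δ = N - M + 1 := by omega
    rw [hKe] at h
    exact_mod_cast h
  have hx0 : (0:ℝ) < ((N - M + 1 : ℕ) : ℝ) := by
    have : 1 ≤ N - M + 1 := by omega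
    exact_mod_cast Nat.lt_of_lt_of_le Nat.zero_lt_one this
  have hlb1 : (δ : ℝ) * Real.logb 2 ((N - M + 1 : ℕ) : ℝ) - Real.logb 2 (Nat.factorial δ)
      ≤ Real.logb 2 (K.choose δ) := by
    have hf : (0:ℝ) < (Nat.factorial δ : ℝ) := by exact_mod_cast Nat.factorial_pos δ
    have hmono : Real.logb 2 (((N - M + 1 : ℕ) : ℝ) ^ δ) ≤
        Real.logb 2 ((Nat.factorial δ : ℝ) * (K.choose δ : ℝ)) :=
      Real.logb_le_logb_of_le (by norm_num : (1:ℝ) < 2) (by positivity) hpow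
    rw [Real.logb_pow, Real.logb_mul hf.ne' h4.ne'] at hmono
    linarith
  -- key analytic bound
  have hcast : ((N - M + 1 : ℕ) : ℝ) = (2 ^ L : ℝ) - (M : ℝ) + 1 := by
    have hNc : ((N : ℕ) : ℝ) = (2 : ℝ) ^ L := by rw [hNdef]; push_cast; ring
    rw [Nat.cast_add, Nat.cast_sub hMle, hNc]; norm_num
  set x : ℝ := (2 ^ L : ℝ) - (M : ℝ) + 1 with hxdef
  have hx : (0:ℝ) < x := by rw [← hcast]; exact hx0
  have hlog2 : (0:ℝ) < Real.log 2 := Real.log_pos (by norm_num)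
  have h2L : (0:ℝ) < (2:ℝ) ^ L := by positivity
  have hkey : (L : ℝ) - ((M : ℝ) - 1) * Real.logb 2 (Real.exp 1) / x ≤ Real.logb 2 x := by
    have hle : Real.log ((2:ℝ) ^ L) - Real.log x ≤ ((M : ℝ) - 1) / x := by
      rw [← Real.log_div h2L.ne' hx.ne']
      have := Real.log_le_sub_one_of_pos (x := (2:ℝ) ^ L / x) (by positivity)
      have heq : (2:ℝ) ^ L / x - 1 = ((M : ℝ) - 1) / x := by
        field_simp
        ring
      linarith
    have hlogpow : Real.log ((2:ℝ) ^ L) = (L : ℝ) * Real.log 2 := by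
      rw [Real.log_pow]
    have hlbe : Real.logb 2 (Real.exp 1) = 1 / Real.log 2 := by
      rw [Real.logb, Real.log_exp]
    rw [hlbe, Real.logb, le_div_iff₀ hlog2]
    have hexp2 : ((L:ℝ) - ((M:ℝ) - 1) * (1 / Real.log 2) / x) * Real.log 2
        = (L:ℝ) * Real.log 2 - ((M:ℝ) - 1) / x := by
      field_simp
    rw [hexp2]
    linarith [hle, hlogpow]
  have hcastL : Real.logb 2 ((N - M + 1 : ℕ) : ℝ) = Real.logb 2 x := by rw [hcast]
  rw [hcastL] at hlb1
  have hδ0 : (0:ℝ) ≤ (δ : ℝ) := by positivity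
  have hmul : (δ : ℝ) * ((L : ℝ) - ((M : ℝ) - 1) * Real.logb 2 (Real.exp 1) / x)
      ≤ (δ : ℝ) * Real.logb 2 x := mul_le_mul_of_nonneg_left hkey hδ0
  rw [ge_iff_le]
  have hexp : (δ : ℝ) * (L:ℝ) - (δ : ℝ) * ((M : ℝ) - 1) * Real.logb 2 (Real.exp 1) / x
      = (δ : ℝ) * ((L : ℝ) - ((M : ℝ) - 1) * Real.logb 2 (Real.exp 1) / x) := by ring
  rw [hexp]
  linarith
end

section
/- Let δ, M, L, L₁, L₂ be positive integers with log₂ M ≤ L₁, M ≤ 2^{L₁}, μ = 2δ+1 ≤ M − δ, L₁ = 2·log₂ M, L₂ = log₂ M, and L ≥ L₁ + L₂ + δ(L₁+1). Then log₂ C(2^L, M) − [ log₂ C(2^{L₁}, M) + μ(L − L₁ − L₂ − δ(L₁+1)) + (M − δ − μ)( log₂(2^{L₂} − 1) + L − L₁ − L₂ ) ] ≤ δ(L − L₁) + μ(L₂ + δ(L₁+1)) + M²·log₂(e)/(2^{L₁} − M) + (M − δ − μ)·log₂(e)/(2^{L₂} − 1). -/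
open Real

lemma aux_logb_sub (a b : ℝ) (hb : 0 < b) (hab : b ≤ a) :
    Real.logb 2 a - Real.logb 2 b ≤ (a / b - 1) / Real.log 2 := by
  have ha : 0 < a := lt_of_lt_of_le hb hab
  have hdiv : 0 < a / b := div_pos ha hb
  have h1 : Real.log (a / b) ≤ a / b - 1 := Real.log_le_sub_one_of_pos hdiv
  have h2 : Real.log (a / b) = Real.log a - Real.log b := Real.log_div (ne_of_gt ha) (ne_of_gt hb)
  have hlog2 : (0:ℝ) < Real.log 2 := Real.log_pos (by norm_num)
  rw [Real.logb, Real.logb, div_sub_div_same, ← h2]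
  gcongr


set_option maxHeartbeats 2000000 in
/-- Redundancy computation of Corollary 1. With `M = 2^m`, `L₁ = 2m`,
`L₂ = m`, `μ = 2δ+1 ≤ M − δ` and `L ≥ L₁ + L₂ + δ(L₁+1)`:
`log₂ C(2^L, M) − [log₂ C(2^{L₁}, M) + μ(L−L₁−L₂−δ(L₁+1))
  + (M−δ−μ)(log₂(2^{L₂}−1) + L−L₁−L₂)]
  ≤ δ(L−L₁) + μ(L₂+δ(L₁+1)) + M²log₂ e/(2^{L₁}−M) + (M−δ−μ)log₂ e/(2^{L₂}−1)`. -/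
theorem stmt_14 (δ M L L₁ L₂ m μ : ℕ)
    (hδ : 0 < δ) (hm : 0 < m) (hM : M = 2 ^ m)
    (hL₁ : L₁ = 2 * m) (hL₂ : L₂ = m) (hμ : μ = 2 * δ + 1)
    (hμM : μ ≤ M - δ) (hδM : δ ≤ M)
    (hL : L₁ + L₂ + δ * (L₁ + 1) ≤ L) :
    Real.logb 2 (Nat.choose (2 ^ L) M) -
        (Real.logb 2 (Nat.choose (2 ^ L₁) M) +
          (μ : ℝ) * ((L : ℝ) - L₁ - L₂ - δ * (L₁ + 1)) +
          ((M : ℝ) - δ - μ) *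
            (Real.logb 2 ((2 : ℝ) ^ L₂ - 1) + ((L : ℝ) - L₁ - L₂))) ≤
      (δ : ℝ) * ((L : ℝ) - L₁) + (μ : ℝ) * ((L₂ : ℝ) + δ * (L₁ + 1)) +
        (M : ℝ) ^ 2 * Real.logb 2 (Real.exp 1) / ((2 : ℝ) ^ L₁ - M) +
        ((M : ℝ) - δ - μ) * Real.logb 2 (Real.exp 1) / ((2 : ℝ) ^ L₂ - 1) := by
  have hlog2 : (0:ℝ) < Real.log 2 := Real.log_pos (by norm_num)
  -- c = logb 2 e = 1/log 2
  have hc : Real.logb 2 (Real.exp 1) = 1 / Real.log 2 := by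
    rw [Real.logb, Real.log_exp]
  set c : ℝ := Real.logb 2 (Real.exp 1) with hcdef
  have hcpos : 0 < c := by rw [hc]; exact div_pos one_pos hlog2
  -- basic numeric facts
  have hM2 : 2 ≤ M := by
    rw [hM]; calc (2:ℕ) = 2^1 := rfl
    _ ≤ 2^m := Nat.pow_le_pow_right (by norm_num) hm
  have hML : M ≤ 2 ^ L₁ := by
    rw [hM, hL₁]; exact Nat.pow_le_pow_right (by norm_num) (by omega)
  have hn₁ : (2:ℕ) ^ L₁ = M ^ 2 := by rw [hM, hL₁, ← pow_mul, Nat.mul_comm]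
  have hMn₁ : M + 2 ≤ 2 ^ L₁ := by
    rw [hn₁]; nlinarith
  have hL₁L : L₁ ≤ L := by omega
  -- real versions
  have hMR : (2:ℝ) ≤ (M:ℝ) := by exact_mod_cast hM2
  have hbpos : (0:ℝ) < (2:ℝ) ^ L₁ - M := by
    have : ((M:ℝ) + 2) ≤ (2:ℝ)^L₁ := by exact_mod_cast hMn₁
    linarith
  have hL₂2 : (2:ℕ) ≤ 2 ^ L₂ := by
    calc (2:ℕ) = 2^1 := rfl
    _ ≤ 2^L₂ := Nat.pow_le_pow_right (by norm_num) (by omega)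
  have he₂pos : (0:ℝ) < (2:ℝ) ^ L₂ - 1 := by
    have : (2:ℝ) ≤ (2:ℝ)^L₂ := by exact_mod_cast hL₂2
    linarith
  -- Step A: choose ratio bound
  have hA : Real.logb 2 (Nat.choose (2 ^ L) M) - Real.logb 2 (Nat.choose (2 ^ L₁) M)
      ≤ (M:ℝ) * ((L:ℝ) - L₁) + (M:ℝ)^2 * c / ((2:ℝ)^L₁ - M) := by
    -- choose(2^L, M) * M! ≤ (2^L)^M
    have h1 : (Nat.choose (2^L) M) * Nat.factorial M ≤ (2^L)^M := by
      have := Nat.descFactorial_le_pow (2^L) M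
      rw [Nat.descFactorial_eq_factorial_mul_choose, Nat.mul_comm] at this
      exact this
    -- (2^L₁ - M)^M ≤ choose(2^L₁,M) * M!
    have h2 : (2^L₁ - M)^M ≤ (Nat.choose (2^L₁) M) * Nat.factorial M := by
      have := Nat.pow_sub_le_descFactorial (2^L₁) M
      rw [Nat.descFactorial_eq_factorial_mul_choose] at this
      calc (2^L₁ - M)^M ≤ (2^L₁ + 1 - M)^M :=
            Nat.pow_le_pow_left (by omega) M
        _ ≤ _ := by rw [Nat.mul_comm] at this; exact this
    have hchoosepos : 0 < Nat.choose (2^L₁) M := Nat.choose_pos hML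
    have hchoosepos2 : 0 < Nat.choose (2^L) M :=
      Nat.choose_pos (hML.trans (Nat.pow_le_pow_right (by norm_num) hL₁L))
    have hfacpos : 0 < Nat.factorial M := Nat.factorial_pos M
    -- go to logb
    have hb2 : (0:ℝ) < ((2^L₁ - M : ℕ) : ℝ)^M := by
      have : 0 < 2^L₁ - M := by omega
      positivity
    have hmono1 : Real.logb 2 ((Nat.choose (2^L) M : ℝ) * (Nat.factorial M : ℝ))
        ≤ Real.logb 2 (((2:ℝ)^L)^M) := by
      apply Real.logb_le_logb_of_le (by norm_num : (1:ℝ) < 2) (by positivity)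
      push_cast
      exact_mod_cast h1
    have hmono2 : Real.logb 2 (((2:ℝ)^L₁ - M)^M)
        ≤ Real.logb 2 ((Nat.choose (2^L₁) M : ℝ) * (Nat.factorial M : ℝ)) := by
      apply Real.logb_le_logb_of_le (by norm_num : (1:ℝ) < 2) (by positivity)
      have : ((2^L₁ - M : ℕ) : ℝ) = (2:ℝ)^L₁ - M := by
        push_cast [Nat.cast_sub hML]; ring
      rw [← this]
      exact_mod_cast h2
    have hsplit1 : Real.logb 2 ((Nat.choose (2^L) M : ℝ) * (Nat.factorial M : ℝ))
        = Real.logb 2 (Nat.choose (2^L) M) + Real.logb 2 (Nat.factorial M) := by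
      rw [Real.logb_mul (by positivity) (by positivity)]
    have hsplit2 : Real.logb 2 ((Nat.choose (2^L₁) M : ℝ) * (Nat.factorial M : ℝ))
        = Real.logb 2 (Nat.choose (2^L₁) M) + Real.logb 2 (Nat.factorial M) := by
      rw [Real.logb_mul (by positivity) (by positivity)]
    have hpow1 : Real.logb 2 (((2:ℝ)^L)^M) = (M:ℝ) * L := by
      rw [← Real.rpow_natCast ((2:ℝ)^L) M, Real.logb_rpow_eq_mul_logb_of_pos (by positivity)]
      rw [← Real.rpow_natCast (2:ℝ) L, Real.logb_rpow_eq_mul_logb_of_pos (by norm_num)]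
      simp [Real.logb_self_eq_one]
    have hpow2 : Real.logb 2 (((2:ℝ)^L₁ - M)^M) = (M:ℝ) * Real.logb 2 ((2:ℝ)^L₁ - M) := by
      rw [← Real.rpow_natCast ((2:ℝ)^L₁ - M) M, Real.logb_rpow_eq_mul_logb_of_pos hbpos]
    have key : Real.logb 2 (Nat.choose (2 ^ L) M) - Real.logb 2 (Nat.choose (2 ^ L₁) M)
        ≤ (M:ℝ) * L - (M:ℝ) * Real.logb 2 ((2:ℝ)^L₁ - M) := by
      have := hmono1
      rw [hsplit1, hpow1] at this
      have h2' := hmono2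
      rw [hsplit2, hpow2] at h2'
      linarith
    -- now bound L = (L - L₁) + L₁, and L₁ - logb(2^L₁ - M) = logb 2^L₁ - logb(2^L₁-M)
    have hlogn₁ : Real.logb 2 ((2:ℝ)^L₁) = (L₁:ℝ) := by
      rw [← Real.rpow_natCast (2:ℝ) L₁, Real.logb_rpow_eq_mul_logb_of_pos (by norm_num)]
      simp [Real.logb_self_eq_one]
    have hgap : Real.logb 2 ((2:ℝ)^L₁) - Real.logb 2 ((2:ℝ)^L₁ - M)
        ≤ (M:ℝ) / ((2:ℝ)^L₁ - M) * c := by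
      have := aux_logb_sub ((2:ℝ)^L₁) ((2:ℝ)^L₁ - M) hbpos (by linarith)
      have heq : ((2:ℝ)^L₁) / ((2:ℝ)^L₁ - M) - 1 = (M:ℝ) / ((2:ℝ)^L₁ - M) := by
        field_simp
        ring
      rw [heq] at this
      calc _ ≤ (M:ℝ) / ((2:ℝ)^L₁ - M) / Real.log 2 := this
        _ = (M:ℝ) / ((2:ℝ)^L₁ - M) * c := by rw [hc]; ring
    rw [hlogn₁] at hgap
    have hMnn : (0:ℝ) ≤ (M:ℝ) := by positivity
    have := mul_le_mul_of_nonneg_left hgap hMnn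
    have hfin : (M:ℝ) * L - (M:ℝ) * Real.logb 2 ((2:ℝ)^L₁ - M)
        ≤ (M:ℝ) * ((L:ℝ) - L₁) + (M:ℝ)^2 * c / ((2:ℝ)^L₁ - M) := by
      have hexp : (M:ℝ) * ((M:ℝ) / ((2:ℝ)^L₁ - M) * c) = (M:ℝ)^2 * c / ((2:ℝ)^L₁ - M) := by
        ring
      nlinarith [this]
    linarith
  -- Step B: L₂ - logb(2^L₂ - 1) ≤ c / (2^L₂ - 1)
  have hB : (L₂:ℝ) - Real.logb 2 ((2:ℝ)^L₂ - 1) ≤ c / ((2:ℝ)^L₂ - 1) := by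
    have hlogn₂ : Real.logb 2 ((2:ℝ)^L₂) = (L₂:ℝ) := by
      rw [← Real.rpow_natCast (2:ℝ) L₂, Real.logb_rpow_eq_mul_logb_of_pos (by norm_num)]
      simp [Real.logb_self_eq_one]
    have := aux_logb_sub ((2:ℝ)^L₂) ((2:ℝ)^L₂ - 1) he₂pos (by linarith)
    have heq : ((2:ℝ)^L₂) / ((2:ℝ)^L₂ - 1) - 1 = 1 / ((2:ℝ)^L₂ - 1) := by
      field_simp
      ring
    rw [heq, hlogn₂] at this
    calc _ ≤ 1 / ((2:ℝ)^L₂ - 1) / Real.log 2 := this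
      _ = c / ((2:ℝ)^L₂ - 1) := by rw [hc]; ring
  -- nonnegativity of M - δ - μ
  have hnn : (0:ℝ) ≤ (M:ℝ) - δ - μ := by
    have : μ + δ ≤ M := by omega
    have : (μ:ℝ) + δ ≤ M := by exact_mod_cast this
    linarith
  have hprod : ((M:ℝ) - δ - μ) * ((L₂:ℝ) - Real.logb 2 ((2:ℝ)^L₂ - 1))
      ≤ ((M:ℝ) - δ - μ) * (c / ((2:ℝ)^L₂ - 1)) := mul_le_mul_of_nonneg_left hB hnn
  -- finish: linear arithmetic + ring identity
  have step1 : Real.logb 2 (Nat.choose (2 ^ L) M) -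
        (Real.logb 2 (Nat.choose (2 ^ L₁) M) +
          (μ : ℝ) * ((L : ℝ) - L₁ - L₂ - δ * (L₁ + 1)) +
          ((M : ℝ) - δ - μ) *
            (Real.logb 2 ((2 : ℝ) ^ L₂ - 1) + ((L : ℝ) - L₁ - L₂)))
      ≤ ((M:ℝ) * ((L:ℝ) - L₁) + (M:ℝ)^2 * c / ((2:ℝ)^L₁ - M)) -
          (μ : ℝ) * ((L : ℝ) - L₁ - L₂ - δ * (L₁ + 1)) -
          ((M : ℝ) - δ - μ) *
            (Real.logb 2 ((2 : ℝ) ^ L₂ - 1) + ((L : ℝ) - L₁ - L₂)) := by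
    linarith [hA]
  have step2 : ((M:ℝ) * ((L:ℝ) - L₁) + (M:ℝ)^2 * c / ((2:ℝ)^L₁ - M)) -
          (μ : ℝ) * ((L : ℝ) - L₁ - L₂ - δ * (L₁ + 1)) -
          ((M : ℝ) - δ - μ) *
            (Real.logb 2 ((2 : ℝ) ^ L₂ - 1) + ((L : ℝ) - L₁ - L₂))
      = (δ : ℝ) * ((L : ℝ) - L₁) + (μ : ℝ) * ((L₂ : ℝ) + δ * (L₁ + 1)) +
          (M:ℝ)^2 * c / ((2:ℝ)^L₁ - M) +
          ((M:ℝ) - δ - μ) * ((L₂:ℝ) - Real.logb 2 ((2:ℝ)^L₂ - 1)) := by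
    ring
  have step3 : ((M:ℝ) - δ - μ) * (c / ((2:ℝ)^L₂ - 1))
      = ((M:ℝ) - δ - μ) * c / ((2:ℝ)^L₂ - 1) := by ring
  linarith [step1, step2.le, hprod, step3.le, step3.ge]
end
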